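/- For the exponential–exponential special case (γ₁ exponential with mean γ̄₁, γ₂ exponential with mean μ_r·λ, independent), the exact end-to-end CDF of the fixed-gain AF SNR is F(γ) = 1 − exp(−γ/γ̄₁) · ∫₀^∞ exp(−γC/(γ̄₁ x)) (1/(μ_r λ)) exp(−x/(μ_r λ)) dx for γ > 0, and F is a valid CDF: nondecreasing, F(0⁺) = 0, and F(γ) → 1 as γ → ∞. -/

import Mathlib

open Real MeasureTheory Set Filter

lemma f2_integrableOn {b : ℝ} (hb : 0 < b) :
    IntegrableOn (fun x => (1 / b) * Real.exp (-x / b)) (Ioi (0:ℝ)) := by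
  have h := (exp_neg_integrableOn_Ioi 0 (b := 1/b) (by positivity)).const_mul (1/b)
  have he : (fun x => (1 / b) * Real.exp (-x / b))
      = fun x : ℝ => (1/b) * Real.exp (-(1/b) * x) := by
    funext x; congr 1; ring
  rw [he]; exact h

lemma f2_integral {b : ℝ} (hb : 0 < b) :
    ∫ x in Ioi (0:ℝ), (1 / b) * Real.exp (-x / b) = 1 := by
  have hderiv : ∀ x ∈ Ici (0:ℝ), HasDerivAt (fun x : ℝ => -Real.exp (-x / b))
      ((1 / b) * Real.exp (-x / b)) x := by
    intro x _
    have h1 : HasDerivAt (fun x : ℝ => -x / b) (-1 / b) x := by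
      simpa using ((hasDerivAt_id x).neg.div_const b)
    have := (h1.exp).neg
    have h2 : HasDerivAt (fun x : ℝ => -Real.exp (-x / b)) (-(Real.exp (-x / b) * (-1 / b))) x := this
    convert h2 using 1
    ring
  have htends : Tendsto (fun x : ℝ => -Real.exp (-x / b)) atTop (nhds 0) := by
    rw [show (0:ℝ) = -0 by simp]
    apply Tendsto.neg
    apply Real.tendsto_exp_atBot.comp
    exact Tendsto.atBot_div_const hb tendsto_neg_atTop_atBot
  have := integral_Ioi_of_hasDerivAt_of_tendsto' hderiv (f2_integrableOn hb) htends
  simpa using this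

lemma I_integrableOn {b γb C : ℝ} (hb : 0 < b) (hγb : 0 < γb) (hC : 0 < C)
    {γ : ℝ} (hγ : 0 ≤ γ) :
    IntegrableOn (fun x => Real.exp (-(γ * C) / (γb * x)) * (1 / b) * Real.exp (-x / b))
      (Ioi (0:ℝ)) := by
  refine Integrable.mono (f2_integrableOn hb) ?_ ?_
  · apply Measurable.aestronglyMeasurable; fun_prop
  · rw [ae_restrict_iff' measurableSet_Ioi]
    filter_upwards with x hx
    have hx0 : (0:ℝ) < x := hx
    have h1 : Real.exp (-(γ * C) / (γb * x)) ≤ 1 := by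
      rw [Real.exp_le_one_iff]
      exact div_nonpos_of_nonpos_of_nonneg (neg_nonpos.mpr (by positivity)) (by positivity)
    rw [Real.norm_eq_abs, Real.norm_eq_abs, abs_of_nonneg (by positivity),
      abs_of_nonneg (by positivity)]
    have := mul_le_mul_of_nonneg_right
      (mul_le_mul_of_nonneg_right h1 (by positivity : (0:ℝ) ≤ 1/b))
      (Real.exp_pos (-x/b)).le
    simpa using this

lemma density_ae_eq {b : ℝ} (hb : 0 < b) :
    (fun x => ENNReal.ofReal (if 0 < x then (1 / b) * Real.exp (-x / b) else 0))
      =ᵐ[volume] ProbabilityTheory.exponentialPDF (1/b) := by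
  have hne : ∀ᵐ x : ℝ, x ≠ 0 := by
    rw [ae_iff]; simpa using measure_singleton (0:ℝ)
  filter_upwards [hne] with x hx
  rw [ProbabilityTheory.exponentialPDF_eq]
  rcases lt_or_gt_of_ne hx with h | h
  · rw [if_neg (by linarith), if_neg (by linarith)]
  · rw [if_pos h, if_pos h.le]
    congr 2
    ring_nf

theorem exp_exp_fg_af_cdf_part1
    {Ω : Type*} [MeasureSpace Ω] (P : Measure Ω) [IsProbabilityMeasure P]
    (g1 g2 : Ω → ℝ) (γbar1 μr lam C : ℝ)
    (hγbar1 : 0 < γbar1) (hμr : 0 < μr) (hlam : 0 < lam) (hC : 0 < C)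
    (hg1 : Measurable g1) (hg2 : Measurable g2)
    (hindep : ProbabilityTheory.IndepFun g1 g2 P)
    (hdist1 : Measure.map g1 P = MeasureTheory.volume.withDensity
      (fun x => ENNReal.ofReal (if 0 < x then (1 / γbar1) * Real.exp (-x / γbar1) else 0)))
    (hdist2 : Measure.map g2 P = MeasureTheory.volume.withDensity
      (fun x => ENNReal.ofReal (if 0 < x then (1 / (μr * lam)) * Real.exp (-x / (μr * lam)) else 0)))
    (γ : ℝ) (hγ : 0 < γ) :
    (P {ω | g1 ω * g2 ω / (g2 ω + C) ≤ γ}).toReal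
      = 1 - Real.exp (-γ / γbar1) *
      ∫ x in Ioi (0:ℝ),
        Real.exp (-(γ * C) / (γbar1 * x)) * (1 / (μr * lam)) *
          Real.exp (-x / (μr * lam)) := by
  have hb : 0 < μr * lam := mul_pos hμr hlam
  set r1 : ℝ := 1 / γbar1 with hr1def
  set r2 : ℝ := 1 / (μr * lam) with hr2def
  have hr1 : 0 < r1 := by positivity
  have hr2 : 0 < r2 := by positivity
  have hd1 : Measure.map g1 P = volume.withDensity (ProbabilityTheory.exponentialPDF r1) := by
    rw [hdist1, withDensity_congr_ae (density_ae_eq hγbar1)]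
  have hd2 : Measure.map g2 P = volume.withDensity (ProbabilityTheory.exponentialPDF r2) := by
    rw [hdist2, withDensity_congr_ae (density_ae_eq hb)]
  set μ1 : Measure ℝ := volume.withDensity (ProbabilityTheory.exponentialPDF r1) with hμ1def
  set μ2 : Measure ℝ := volume.withDensity (ProbabilityTheory.exponentialPDF r2) with hμ2def
  have hμ1Iic : ∀ t : ℝ, 0 ≤ t → μ1 (Iic t) = ENNReal.ofReal (1 - Real.exp (-(r1 * t))) := by
    intro t ht
    rw [hμ1def, withDensity_apply _ measurableSet_Iic,
      ProbabilityTheory.lintegral_exponentialPDF_eq_antiDeriv hr1, if_pos ht]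
  set S : Set (ℝ × ℝ) := {p : ℝ × ℝ | p.1 * p.2 / (p.2 + C) ≤ γ} with hSdef
  have hS : MeasurableSet S := by
    apply measurableSet_le _ measurable_const
    fun_prop
  have hpair : Measure.map (fun ω => (g1 ω, g2 ω)) P
      = (Measure.map g1 P).prod (Measure.map g2 P) :=
    (ProbabilityTheory.indepFun_iff_map_prod_eq_prod_map_map
      hg1.aemeasurable hg2.aemeasurable).mp hindep
  have hev : P {ω | g1 ω * g2 ω / (g2 ω + C) ≤ γ} = (μ1.prod μ2) S := by
    rw [← hd1, ← hd2, ← hpair, Measure.map_apply (hg1.prodMk hg2) hS]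
    rfl
  rw [hev, Measure.prod_apply_symm hS]
  have hsect : ∀ y : ℝ, 0 < y →
      ((fun x => (x, y)) ⁻¹' S) = Iic (γ * (y + C) / y) := by
    intro y hy
    ext x
    simp only [hSdef, mem_preimage, mem_setOf_eq, mem_Iic]
    rw [div_le_iff₀ (by positivity), ← le_div_iff₀ hy]
  -- the section measure function
  have hmsec : Measurable fun y => μ1 ((fun x => (x, y)) ⁻¹' S) :=
    measurable_measure_prodMk_right hS
  have hpdf2meas : Measurable (ProbabilityTheory.exponentialPDF r2) :=
    ENNReal.measurable_ofReal.comp (ProbabilityTheory.measurable_exponentialPDFReal r2)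
  rw [hμ2def, lintegral_withDensity_eq_lintegral_mul _ hpdf2meas hmsec]
  -- restrict to Ioi 0
  set G : ℝ → ℝ := fun y =>
    (1 / (μr * lam)) * Real.exp (-y / (μr * lam))
      * (1 - Real.exp (-(r1 * (γ * (y + C) / y)))) with hGdef
  have hstep : ∫⁻ y, ProbabilityTheory.exponentialPDF r2 y * μ1 ((fun x => (x, y)) ⁻¹' S)
      = ∫⁻ y in Ioi (0:ℝ), ENNReal.ofReal (G y) := by
    rw [← lintegral_indicator measurableSet_Ioi]
    apply lintegral_congr_ae
    have hne : ∀ᵐ y : ℝ, y ≠ 0 := by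
      rw [ae_iff]; simpa using measure_singleton (0:ℝ)
    filter_upwards [hne] with y hy
    rcases lt_or_gt_of_ne hy with h | h
    · rw [indicator_of_notMem (by simp [h.not_gt] : y ∉ Ioi (0:ℝ)),
        ProbabilityTheory.exponentialPDF_of_neg h, zero_mul]
    · rw [indicator_of_mem (mem_Ioi.mpr h), hsect y h,
        hμ1Iic _ (by positivity), ProbabilityTheory.exponentialPDF_of_nonneg h.le,
        ← ENNReal.ofReal_mul (by positivity), hGdef]
      congr 1
      have harg : -(r2 * y) = -y / (μr * lam) := by rw [hr2def]; ring
      rw [harg]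
  simp only [Pi.mul_apply]
  rw [hstep]
  -- convert to a real integral
  have hGnonneg : ∀ᵐ y ∂(volume.restrict (Ioi (0:ℝ))), 0 ≤ G y := by
    rw [ae_restrict_iff' measurableSet_Ioi]
    filter_upwards with y hy
    have hy0 : (0:ℝ) < y := hy
    have : Real.exp (-(r1 * (γ * (y + C) / y))) ≤ 1 := by
      rw [Real.exp_le_one_iff]
      simp only [neg_nonpos]
      positivity
    have h2 : (0:ℝ) ≤ (1 / (μr * lam)) * Real.exp (-y / (μr * lam)) := by positivity
    rw [hGdef]
    nlinarith
  have hGmeas : AEStronglyMeasurable G (volume.restrict (Ioi (0:ℝ))) := by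
    apply Measurable.aestronglyMeasurable
    rw [hGdef]; fun_prop
  have hGint : IntegrableOn G (Ioi (0:ℝ)) := by
    refine Integrable.mono (f2_integrableOn hb) hGmeas ?_
    rw [ae_restrict_iff' measurableSet_Ioi]
    filter_upwards with y hy
    have hy0 : (0:ℝ) < y := hy
    have h1 : Real.exp (-(r1 * (γ * (y + C) / y))) ≤ 1 := by
      rw [Real.exp_le_one_iff]
      simp only [neg_nonpos]
      positivity
    have h3 := Real.exp_pos (-(r1 * (γ * (y + C) / y)))
    have h2 : (0:ℝ) < (1 / (μr * lam)) * Real.exp (-y / (μr * lam)) := by positivity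
    rw [hGdef, Real.norm_eq_abs, Real.norm_eq_abs, abs_of_nonneg (by nlinarith),
      abs_of_nonneg h2.le]
    nlinarith
  rw [← ofReal_integral_eq_lintegral_ofReal hGint hGnonneg,
    ENNReal.toReal_ofReal (integral_nonneg_of_ae hGnonneg)]
  -- compute the integral
  have hIint := I_integrableOn hb hγbar1 hC hγ.le
  have hkey : ∀ y ∈ Ioi (0:ℝ), G y
      = (1 / (μr * lam)) * Real.exp (-y / (μr * lam))
        - Real.exp (-γ / γbar1) * (Real.exp (-(γ * C) / (γbar1 * y)) * (1 / (μr * lam))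
            * Real.exp (-y / (μr * lam))) := by
    intro y hy
    have hy0 : (0:ℝ) < y := hy
    have hsplit : Real.exp (-(r1 * (γ * (y + C) / y)))
        = Real.exp (-γ / γbar1) * Real.exp (-(γ * C) / (γbar1 * y)) := by
      rw [← Real.exp_add]
      congr 1
      rw [hr1def]
      field_simp
      ring
    rw [hGdef]
    simp only []
    rw [hsplit]
    ring
  rw [setIntegral_congr_fun measurableSet_Ioi hkey,
    integral_sub (f2_integrableOn hb) (hIint.const_mul _), f2_integral hb, integral_const_mul]

theorem exp_exp_fg_af_cdf
    {Ω : Type*} [MeasureSpace Ω] (P : Measure Ω) [IsProbabilityMeasure P]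
    (g1 g2 : Ω → ℝ) (γbar1 μr lam C : ℝ)
    (hγbar1 : 0 < γbar1) (hμr : 0 < μr) (hlam : 0 < lam) (hC : 0 < C)
    (hg1 : Measurable g1) (hg2 : Measurable g2)
    (hindep : ProbabilityTheory.IndepFun g1 g2 P)
    (hdist1 : Measure.map g1 P = MeasureTheory.volume.withDensity
      (fun x => ENNReal.ofReal (if 0 < x then (1 / γbar1) * Real.exp (-x / γbar1) else 0)))
    (hdist2 : Measure.map g2 P = MeasureTheory.volume.withDensity
      (fun x => ENNReal.ofReal (if 0 < x then (1 / (μr * lam)) * Real.exp (-x / (μr * lam)) else 0)))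
    (F : ℝ → ℝ)
    (hF : ∀ γ : ℝ, F γ = 1 - Real.exp (-γ / γbar1) *
      ∫ x in Ioi (0:ℝ),
        Real.exp (-(γ * C) / (γbar1 * x)) * (1 / (μr * lam)) *
          Real.exp (-x / (μr * lam))) :
    (∀ γ : ℝ, 0 < γ →
        (P {ω | g1 ω * g2 ω / (g2 ω + C) ≤ γ}).toReal = F γ) ∧
    MonotoneOn F (Ioi 0) ∧
    Filter.Tendsto F (nhdsWithin 0 (Ioi 0)) (nhds 0) ∧
    Filter.Tendsto F Filter.atTop (nhds 1) := by
  have hb : 0 < μr * lam := mul_pos hμr hlam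
  set I : ℝ → ℝ := fun γ => ∫ x in Ioi (0:ℝ),
      Real.exp (-(γ * C) / (γbar1 * x)) * (1 / (μr * lam)) * Real.exp (-x / (μr * lam))
    with hIdef
  have hF' : ∀ γ : ℝ, F γ = 1 - Real.exp (-γ / γbar1) * I γ := hF
  have hInonneg : ∀ γ : ℝ, 0 ≤ I γ := fun γ => integral_nonneg fun x => by positivity
  have hIle : ∀ γ : ℝ, 0 ≤ γ → I γ ≤ 1 := by
    intro γ hγ
    rw [hIdef]
    calc ∫ x in Ioi (0:ℝ),
          Real.exp (-(γ * C) / (γbar1 * x)) * (1 / (μr * lam)) * Real.exp (-x / (μr * lam))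
        ≤ ∫ x in Ioi (0:ℝ), (1 / (μr * lam)) * Real.exp (-x / (μr * lam)) := by
          apply setIntegral_mono_on (I_integrableOn hb hγbar1 hC hγ) (f2_integrableOn hb)
            measurableSet_Ioi
          intro x hx
          have hx0 : (0:ℝ) < x := hx
          have h1 : Real.exp (-(γ * C) / (γbar1 * x)) ≤ 1 := by
            rw [Real.exp_le_one_iff]
            exact div_nonpos_of_nonpos_of_nonneg (neg_nonpos.mpr (by positivity)) (by positivity)
          have := mul_le_mul_of_nonneg_right
            (mul_le_mul_of_nonneg_right h1 (by positivity : (0:ℝ) ≤ 1 / (μr * lam)))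
            (Real.exp_pos (-x / (μr * lam))).le
          simpa using this
      _ = 1 := f2_integral hb
  have hImono : ∀ γ γ' : ℝ, 0 ≤ γ → γ ≤ γ' → I γ' ≤ I γ := by
    intro γ γ' h0 h
    apply setIntegral_mono_on (I_integrableOn hb hγbar1 hC (h0.trans h))
      (I_integrableOn hb hγbar1 hC h0) measurableSet_Ioi
    intro x hx
    have hx0 : (0:ℝ) < x := hx
    have hd : (0:ℝ) < γbar1 * x := by positivity
    have h1 : Real.exp (-(γ' * C) / (γbar1 * x)) ≤ Real.exp (-(γ * C) / (γbar1 * x)) := by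
      apply Real.exp_le_exp.mpr
      rw [div_le_div_iff₀ hd hd]
      nlinarith [mul_nonneg (mul_nonneg (sub_nonneg.mpr h) hC.le) hd.le]
    have := mul_le_mul_of_nonneg_right
      (mul_le_mul_of_nonneg_right h1 (by positivity : (0:ℝ) ≤ 1 / (μr * lam)))
      (Real.exp_pos (-x / (μr * lam))).le
    exact this
  refine ⟨?_, ?_, ?_, ?_⟩
  · intro γ hγ
    rw [exp_exp_fg_af_cdf_part1 P g1 g2 γbar1 μr lam C hγbar1 hμr hlam hC hg1 hg2 hindep
      hdist1 hdist2 γ hγ, hF' γ]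
  · intro a ha c hc hac
    rw [hF' a, hF' c]
    have ha0 : (0:ℝ) < a := ha
    have key : Real.exp (-c / γbar1) * I c ≤ Real.exp (-a / γbar1) * I a := by
      apply mul_le_mul _ (hImono a c ha0.le hac) (hInonneg c) (Real.exp_pos _).le
      apply Real.exp_le_exp.mpr
      rw [div_le_div_iff₀ hγbar1 hγbar1]
      nlinarith
    linarith
  · have hexp0 : Tendsto (fun γ : ℝ => Real.exp (-γ / γbar1)) (nhdsWithin 0 (Ioi 0)) (nhds 1) := by
      have hc : Continuous fun γ : ℝ => Real.exp (-γ / γbar1) := by fun_prop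
      have := (hc.tendsto 0).mono_left (nhdsWithin_le_nhds (s := Ioi (0:ℝ)))
      simpa using this
    have hI0 : Tendsto I (nhdsWithin 0 (Ioi 0)) (nhds 1) := by
      rw [← f2_integral hb]
      apply tendsto_integral_filter_of_dominated_convergence
        (fun x => (1 / (μr * lam)) * Real.exp (-x / (μr * lam)))
      · filter_upwards with γ
        exact (by fun_prop : Measurable fun x => Real.exp (-(γ * C) / (γbar1 * x))
          * (1 / (μr * lam)) * Real.exp (-x / (μr * lam))).aestronglyMeasurable
      · filter_upwards [self_mem_nhdsWithin] with γ hγ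
        rw [ae_restrict_iff' measurableSet_Ioi]
        filter_upwards with x hx
        have hx0 : (0:ℝ) < x := hx
        have hγ0 : (0:ℝ) < γ := hγ
        have h1 : Real.exp (-(γ * C) / (γbar1 * x)) ≤ 1 := by
          rw [Real.exp_le_one_iff]
          exact div_nonpos_of_nonpos_of_nonneg (neg_nonpos.mpr (by positivity)) (by positivity)
        rw [Real.norm_eq_abs, abs_of_nonneg (by positivity)]
        have := mul_le_mul_of_nonneg_right
          (mul_le_mul_of_nonneg_right h1 (by positivity : (0:ℝ) ≤ 1 / (μr * lam)))
          (Real.exp_pos (-x / (μr * lam))).le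
        simpa using this
      · exact f2_integrableOn hb
      · rw [ae_restrict_iff' measurableSet_Ioi]
        filter_upwards with x
        intro hx0'
        have hx0 : (0:ℝ) < x := hx0'
        have hc : Continuous fun γ : ℝ => Real.exp (-(γ * C) / (γbar1 * x))
            * (1 / (μr * lam)) * Real.exp (-x / (μr * lam)) := by fun_prop
        have := (hc.tendsto 0).mono_left (nhdsWithin_le_nhds (s := Ioi (0:ℝ)))
        simpa using this
    have := (hexp0.mul hI0).const_sub 1
    have h2 : Tendsto F (nhdsWithin 0 (Ioi 0)) (nhds (1 - 1 * 1)) := by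
      apply Tendsto.congr _ this
      intro γ
      rw [hF' γ]
    simpa using h2
  · have hexptop : Tendsto (fun γ : ℝ => Real.exp (-γ / γbar1)) atTop (nhds 0) := by
      apply Real.tendsto_exp_atBot.comp
      exact Tendsto.atBot_div_const hγbar1 tendsto_neg_atTop_atBot
    have hprod : Tendsto (fun γ => Real.exp (-γ / γbar1) * I γ) atTop (nhds 0) := by
      apply squeeze_zero' _ _ hexptop
      · filter_upwards with γ
        exact mul_nonneg (Real.exp_pos _).le (hInonneg γ)
      · filter_upwards [eventually_ge_atTop (0:ℝ)] with γ hγ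
        have h1 := hIle γ hγ
        nlinarith [Real.exp_pos (-γ / γbar1), hInonneg γ]
    have := hprod.const_sub 1
    have h2 : Tendsto F atTop (nhds (1 - 0)) := by
      apply Tendsto.congr _ this
      intro γ
      rw [hF' γ]
    simpa using h2
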